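/- Let p be a prime and s > 1 an integer, and set q = p^{s-1}. Let F ∈ F_p[[x,y]] be the Honda formal group law of height s, and let w̄_1(x,y) ∈ F_p[x,y] be the mod p reduction of the first Witt addition polynomial w_1(x,y) = -Σ_{0<j<p} (1/p) C(p,j) x^j y^{p-j} ∈ Z[x,y], where C(p,j) denotes the binomial coefficient. Then F(x,y) ≡ x + y + w̄_1(x,y)^q modulo the ideal (y^{q^2}) of F_p[[x,y]]. -/

import Mathlib

open MvPowerSeries Finsupp
open scoped Classical

/-- Substitution of a multivariate power series (with zero constant term)
into a one-variable power series. -/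
noncomputable def substPS {σ R : Type*} [CommRing R]
    (g : MvPowerSeries σ R) (f : PowerSeries R) : MvPowerSeries σ R :=
  fun d => ∑ n ∈ Finset.range (d.sum (fun _ k => k) + 1),
    PowerSeries.coeff n f * MvPowerSeries.coeff d (g ^ n)

/-- Substitution of a pair of power series (with zero constant terms) into a
two-variable power series `F`, i.e. `F(a, b)`. -/
noncomputable def subst2 {σ R : Type*} [CommRing R]
    (a b : MvPowerSeries σ R) (F : MvPowerSeries (Fin 2) R) : MvPowerSeries σ R :=
  fun d => ∑ i ∈ Finset.range (d.sum (fun _ k => k) + 1),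
    ∑ j ∈ Finset.range (d.sum (fun _ k => k) + 1),
      MvPowerSeries.coeff (Finsupp.single (0 : Fin 2) i + Finsupp.single 1 j) F *
        MvPowerSeries.coeff d (a ^ i * b ^ j)

/-- The Honda logarithm `l(x) = Σ_{i ≥ 0} p^{-i} x^{p^{s i}}` over `ℚ_p`. -/
noncomputable def hondaLog (p s : ℕ) [Fact p.Prime] : PowerSeries ℚ_[p] :=
  PowerSeries.mk fun n =>
    if h : ∃ i, n = p ^ (s * i) then (p : ℚ_[p]) ^ (-(Nat.find h : ℤ)) else 0

/-- `F ∈ 𝔽_p[[x,y]]` is the Honda formal group law of height `s`:  it is the coefficientwise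
mod `p` reduction of the (unique) power series `F₀` with coefficients in `ℤ_p` and zero
constant term satisfying `l(F₀(x,y)) = l(x) + l(y)` over `ℚ_p`, where `l` is the Honda
logarithm `l(x) = Σ_{i ≥ 0} p^{-i} x^{p^{s i}}`. -/
def IsHondaFGL (p : ℕ) [Fact p.Prime] (s : ℕ) (F : MvPowerSeries (Fin 2) (ZMod p)) : Prop :=
  ∃ F₀ : MvPowerSeries (Fin 2) ℤ_[p],
    MvPowerSeries.constantCoeff F₀ = 0 ∧
    substPS (MvPowerSeries.map (PadicInt.Coe.ringHom (p := p)) F₀) (hondaLog p s) =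
      substPS (MvPowerSeries.X 0) (hondaLog p s) + substPS (MvPowerSeries.X 1) (hondaLog p s) ∧
    F = MvPowerSeries.map (PadicInt.toZMod (p := p)) F₀

/-- The first Witt addition polynomial `w₁(x,y) = -Σ_{0<j<p} (1/p) C(p,j) xʲ y^{p-j}`. -/
noncomputable def wittW1 (p : ℕ) : MvPolynomial (Fin 2) ℤ :=
  -∑ j ∈ Finset.Ioo 0 p,
    MvPolynomial.C ((p.choose j : ℤ) / (p : ℤ)) *
      MvPolynomial.X 0 ^ j * MvPolynomial.X 1 ^ (p - j)


/-- degree of a `Fin 2` finsupp -/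
lemma dsum_eq (d : Fin 2 →₀ ℕ) : (d.sum fun _ k => k) = d 0 + d 1 := by
  rw [Finsupp.sum_fintype _ _ (fun _ => rfl), Fin.sum_univ_two]

lemma fin2_eq_zero (d : Fin 2 →₀ ℕ) (h0 : d 0 = 0) (h1 : d 1 = 0) : d = 0 := by
  ext i
  fin_cases i <;> simpa

/-- vanishing of coefficients of powers below the "weight" -/
lemma coeff_pow_eq_zero_of_weight {R : Type*} [CommRing R] (w : (Fin 2 →₀ ℕ) →+ ℕ)
    (g : MvPowerSeries (Fin 2) R) (hg : ∀ e, w e = 0 → MvPowerSeries.coeff e g = 0)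
    {n : ℕ} {d : Fin 2 →₀ ℕ} (h : w d < n) : MvPowerSeries.coeff d (g ^ n) = 0 := by
  classical
  rw [MvPowerSeries.coeff_pow]
  apply Finset.sum_eq_zero
  intro l hl
  rw [Finset.mem_finsuppAntidiag] at hl
  by_contra hne
  have hpos : ∀ i ∈ Finset.range n, 1 ≤ w (l i) := by
    intro i hi
    by_contra h1
    push_neg at h1
    have h0 : w (l i) = 0 := by omega
    exact hne (Finset.prod_eq_zero hi (hg _ h0))
  have hsum : ∑ i ∈ Finset.range n, w (l i) = w d := by
    rw [← hl.1]
    exact (map_sum w _ _).symm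
  have : n ≤ w d := by
    calc n = ∑ _i ∈ Finset.range n, 1 := by simp
    _ ≤ ∑ i ∈ Finset.range n, w (l i) := Finset.sum_le_sum hpos
    _ = w d := hsum
  omega

/-- total-degree weight -/
noncomputable def wdeg : (Fin 2 →₀ ℕ) →+ ℕ :=
  Finsupp.applyAddHom (0 : Fin 2) + Finsupp.applyAddHom (1 : Fin 2)

@[simp] lemma wdeg_apply (d : Fin 2 →₀ ℕ) : wdeg d = d 0 + d 1 := rfl

/-- y-degree weight -/
noncomputable def wy : (Fin 2 →₀ ℕ) →+ ℕ := Finsupp.applyAddHom (1 : Fin 2)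

@[simp] lemma wy_apply (d : Fin 2 →₀ ℕ) : wy d = d 1 := rfl

lemma coeff_pow_eq_zero_of_constantCoeff {R : Type*} [CommRing R]
    (g : MvPowerSeries (Fin 2) R) (hg : MvPowerSeries.constantCoeff g = 0)
    {n : ℕ} {d : Fin 2 →₀ ℕ} (h : d 0 + d 1 < n) : MvPowerSeries.coeff d (g ^ n) = 0 := by
  apply coeff_pow_eq_zero_of_weight wdeg g _ (by simpa)
  intro e he
  simp only [wdeg_apply] at he
  have : e = 0 := fin2_eq_zero e (by omega) (by omega)
  subst this
  rw [MvPowerSeries.coeff_zero_eq_constantCoeff]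
  exact hg

namespace HondaAux

local notation "XX" => (MvPolynomial.X : Fin 2 → MvPolynomial (Fin 2) ℤ)
local notation "CC" => (MvPolynomial.C : ℤ →+* MvPolynomial (Fin 2) ℤ)

variable (p : ℕ) [hp : Fact p.Prime]

/-- `X 1` divides `wittW1` -/
lemma X1_dvd_wittW1 : XX 1 ∣ wittW1 p := by
  unfold wittW1
  apply Dvd.dvd.neg_right
  apply Finset.dvd_sum
  intro j hj
  rw [Finset.mem_Ioo] at hj
  have h1 : p - j = (p - j - 1) + 1 := by omega
  rw [h1, pow_succ]
  exact ⟨CC ((p.choose j : ℤ) / (p : ℤ)) * XX 0 ^ j * XX 1 ^ (p - j - 1), by ring⟩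

/-- coefficient of a power of `wittW1` vanishes below the y-order -/
lemma coeff_wittW1_pow_eq_zero {c : ℕ} {v : Fin 2 →₀ ℕ} (hv : v 1 < c) :
    MvPolynomial.coeff v ((wittW1 p) ^ c) = 0 := by
  obtain ⟨h, hh⟩ := X1_dvd_wittW1 p
  rw [hh, mul_pow, MvPolynomial.coeff_mul]
  apply Finset.sum_eq_zero
  intro x hx
  rw [Finset.HasAntidiagonal.mem_antidiagonal] at hx
  rw [MvPolynomial.coeff_X_pow]
  split_ifs with h1
  · exfalso
    have h2 : x.1 1 = c := by rw [← h1]; simp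
    have h3 : v 1 = c + x.2 1 := by
      rw [← hx]; simp [h2]
    omega
  · simp

/-- coefficient of `h * wittW1^c` vanishes below the y-order -/
lemma coeff_mul_wittW1_pow_eq_zero (h : MvPolynomial (Fin 2) ℤ) {c : ℕ} {d : Fin 2 →₀ ℕ}
    (hd : d 1 < c) : MvPolynomial.coeff d (h * (wittW1 p) ^ c) = 0 := by
  rw [MvPolynomial.coeff_mul]
  apply Finset.sum_eq_zero
  intro x hx
  rw [Finset.HasAntidiagonal.mem_antidiagonal] at hx
  have h2 : x.2 1 ≤ d 1 := by rw [← hx]; simp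
  rw [coeff_wittW1_pow_eq_zero p (by omega), mul_zero]

/-- homogeneity -/
lemma wittW1_isHomogeneous : (wittW1 p).IsHomogeneous p := by
  unfold wittW1
  apply MvPolynomial.IsHomogeneous.neg
  apply MvPolynomial.IsHomogeneous.sum _ _ p
  intro j hj
  rw [Finset.mem_Ioo] at hj
  have h := ((MvPolynomial.isHomogeneous_C (Fin 2) ((p.choose j : ℤ) / (p : ℤ))).mul
    ((MvPolynomial.isHomogeneous_X ℤ (0 : Fin 2)).pow j)).mul
    ((MvPolynomial.isHomogeneous_X ℤ (1 : Fin 2)).pow (p - j))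
  have h1 : 0 + 1 * j + 1 * (p - j) = p := by omega
  rwa [h1] at h

/-- the basic Witt identity: `X0^p + X1^p = (X0+X1)^p + p * w₁` -/
lemma witt_identity :
    XX 0 ^ p + XX 1 ^ p = (XX 0 + XX 1) ^ p + CC (p : ℤ) * wittW1 p := by
  have hsplit : Finset.range (p + 1) = insert 0 (insert p (Finset.Ioo 0 p)) := by
    ext x
    simp only [Finset.mem_range, Finset.mem_insert, Finset.mem_Ioo]
    have := hp.out.two_le
    omega
  have hCw : CC (p : ℤ) * wittW1 p
      = -∑ j ∈ Finset.Ioo 0 p, CC ((p.choose j : ℤ)) * XX 0 ^ j * XX 1 ^ (p - j) := by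
    unfold wittW1
    rw [mul_neg, neg_inj, Finset.mul_sum]
    apply Finset.sum_congr rfl
    intro j hj
    rw [Finset.mem_Ioo] at hj
    have hdvd : (p : ℤ) ∣ (p.choose j : ℤ) :=
      Int.natCast_dvd_natCast.2 (hp.out.dvd_choose_self (by omega) hj.2)
    rw [← mul_assoc, ← mul_assoc, ← MvPolynomial.C_mul, Int.mul_ediv_cancel' hdvd]
  have h2 := hp.out.two_le
  rw [hCw, add_pow]
  rw [hsplit, Finset.sum_insert (by simp only [Finset.mem_insert, Finset.mem_Ioo]; omega),
    Finset.sum_insert (by simp only [Finset.mem_Ioo]; omega)]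
  have hsum : ∀ j ∈ Finset.Ioo 0 p,
      XX 0 ^ j * XX 1 ^ (p - j) * ((p.choose j : ℕ) : MvPolynomial (Fin 2) ℤ)
        = CC ((p.choose j : ℤ)) * XX 0 ^ j * XX 1 ^ (p - j) := by
    intro j hj
    rw [show (CC (((p.choose j : ℕ)) : ℤ)) = ((p.choose j : ℕ) : MvPolynomial (Fin 2) ℤ)
      from map_natCast CC _]
    ring
  rw [Finset.sum_congr rfl hsum]
  simp only [pow_zero, one_mul, Nat.sub_self, Nat.choose_self, Nat.choose_zero_right,
    Nat.cast_one, mul_one, Nat.sub_zero]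
  ring

end HondaAux

namespace HondaAux
variable (p : ℕ) [hp : Fact p.Prime]

/-- binomial valuation helper -/
lemma pow_dvd_choose_pp (n k : ℕ) (hk : k ≠ 0) (hkn : k ≤ p ^ n) :
    ∃ v, p ^ v ∣ k ∧ v < k ∧ v ≤ n ∧ p ^ (n - v) ∣ (p ^ n).choose k := by
  have hfin := Nat.multiplicity_eq_factorization (n := k) hp.out hk
  set v := multiplicity p k with hv
  have hdvd : p ^ v ∣ k := pow_multiplicity_dvd p k
  have hle : p ^ v ≤ k := Nat.le_of_dvd (Nat.pos_of_ne_zero hk) hdvd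
  have hvk : v < k := lt_of_lt_of_le (Nat.lt_pow_self (n := v) hp.out.one_lt) hle
  have hvn : v ≤ n := by
    have : p ^ v ≤ p ^ n := le_trans hle hkn
    exact (Nat.pow_le_pow_iff_right hp.out.one_lt).1 this
  refine ⟨v, hdvd, hvk, hvn, ?_⟩
  apply pow_dvd_of_le_emultiplicity
  rw [hp.out.emultiplicity_choose_prime_pow hkn hk]

/-- Frobenius: substituting `p^k`-th powers is the `p^k`-th power, over `ZMod p` -/
lemma bind_pow_char (k : ℕ) (f : MvPolynomial (Fin 2) (ZMod p)) :
    MvPolynomial.bind₁ (fun i => MvPolynomial.X i ^ (p ^ k)) f = f ^ (p ^ k) := by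
  haveI : CharP (MvPolynomial (Fin 2) (ZMod p)) p := by infer_instance
  induction f using MvPolynomial.induction_on with
  | C a =>
      rw [MvPolynomial.bind₁_C_right, ← map_pow, ZMod.pow_card_pow]
  | add f g hf hg =>
      rw [map_add, hf, hg, add_pow_char_pow]
  | mul_X f i hf =>
      rw [map_mul, MvPolynomial.bind₁_X_right, hf, mul_pow]

local notation "XX" => (MvPolynomial.X : Fin 2 → MvPolynomial (Fin 2) ℤ)
local notation "CC" => (MvPolynomial.C : ℤ →+* MvPolynomial (Fin 2) ℤ)

lemma natCast_eq_CC (n : ℕ) : (n : MvPolynomial (Fin 2) ℤ) = CC ((n : ℕ) : ℤ) :=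
  (map_natCast CC n).symm

/-- mod `p²` Witt identity at level `p^s` -/
lemma witt_identity_pow (s : ℕ) (hs : 1 ≤ s) :
    ∃ c : MvPolynomial (Fin 2) ℤ,
      XX 0 ^ (p ^ s) + XX 1 ^ (p ^ s)
        = (XX 0 + XX 1) ^ (p ^ s) + CC (p : ℤ) * (wittW1 p) ^ (p ^ (s - 1))
          + CC ((p : ℤ) ^ 2) * c := by
  set q := p ^ (s - 1) with hq
  have hqp : q * p = p ^ s := by
    rw [hq, ← pow_succ]
    congr 1
    omega
  have h1 := congrArg (MvPolynomial.bind₁ (fun i : Fin 2 => XX i ^ q)) (witt_identity p)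
  simp only [map_add, map_pow, map_mul, MvPolynomial.bind₁_X_right,
    MvPolynomial.bind₁_C_right, ← pow_mul] at h1
  rw [hqp] at h1
  -- h1 : X0^(p^s) + X1^(p^s) = (X0^q + X1^q)^p + CC p * bind₁ g (wittW1 p)
  have hfrob : CC (p : ℤ) ∣ MvPolynomial.bind₁ (fun i : Fin 2 => XX i ^ q) (wittW1 p)
      - (wittW1 p) ^ q := by
    rw [show ((p : ℤ)) = ((p : ℕ) : ℤ) by norm_num, MvPolynomial.C_dvd_iff_zmod]
    rw [map_sub, MvPolynomial.map_bind₁, map_pow]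
    have hgm : (fun i : Fin 2 => (MvPolynomial.map (Int.castRingHom (ZMod p))) (XX i ^ q))
        = fun i : Fin 2 => MvPolynomial.X i ^ (p ^ (s - 1)) := by
      funext i
      simp [hq]
    rw [hgm, bind_pow_char, sub_self]
  have hbase : CC (p : ℤ) ∣ (XX 0 ^ q + XX 1 ^ q) - (XX 0 + XX 1) ^ q := by
    rw [show ((p : ℤ)) = ((p : ℕ) : ℤ) by norm_num, MvPolynomial.C_dvd_iff_zmod]
    simp only [map_sub, map_add, map_pow, MvPolynomial.map_X]
    rw [hq, add_pow_char_pow, sub_self]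
  have hpow : CC ((p : ℤ) ^ 2) ∣ (XX 0 ^ q + XX 1 ^ q) ^ p - ((XX 0 + XX 1) ^ q) ^ p := by
    have h := dvd_sub_pow_of_dvd_sub (p := p)
      (a := XX 0 ^ q + XX 1 ^ q) (b := (XX 0 + XX 1) ^ q) (by rwa [natCast_eq_CC]) 1
    have h2 : ((p : MvPolynomial (Fin 2) ℤ)) ^ (1 + 1) = CC ((p : ℤ) ^ 2) := by
      rw [natCast_eq_CC, ← map_pow]
    rw [h2] at h
    simpa using h
  obtain ⟨c1, hc1⟩ := hpow
  obtain ⟨c2, hc2⟩ := hfrob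
  have hCC : CC (p : ℤ) * CC (p : ℤ) = CC ((p : ℤ) ^ 2) := by
    rw [← map_mul]
    ring_nf
  refine ⟨c1 + c2, ?_⟩
  have e1 : MvPolynomial.bind₁ (fun i : Fin 2 => XX i ^ q) (wittW1 p)
      = (wittW1 p) ^ q + CC (p : ℤ) * c2 := by rw [← hc2]; ring
  have e2 : (XX 0 ^ q + XX 1 ^ q) ^ p
      = ((XX 0 + XX 1) ^ q) ^ p + CC ((p : ℤ) ^ 2) * c1 := by rw [← hc1]; ring
  rw [h1, e1, e2, ← pow_mul, hqp]
  linear_combination c2 * hCC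

end HondaAux

namespace HondaAux
variable (p : ℕ) [hp : Fact p.Prime]

local notation "XX" => (MvPolynomial.X : Fin 2 → MvPolynomial (Fin 2) ℤ)
local notation "CC" => (MvPolynomial.C : ℤ →+* MvPolynomial (Fin 2) ℤ)

/-- the integral model of the claimed formal group law -/
noncomputable def Gpoly (p s : ℕ) : MvPolynomial (Fin 2) ℤ :=
  MvPolynomial.X 0 + MvPolynomial.X 1 + (wittW1 p) ^ (p ^ (s - 1))

lemma lemA' (s i : ℕ) (hs : 2 ≤ s) (hi : 1 ≤ i) (d : Fin 2 →₀ ℕ)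
    (hd : d 1 < (p ^ (s - 1)) ^ 2) :
    (p : ℤ) ^ (i + 1) ∣
      MvPolynomial.coeff d ((Gpoly p s) ^ (p ^ (s * i)) - (XX 0 + XX 1) ^ (p ^ (s * i))) := by
  set q := p ^ (s - 1) with hq
  set m := p ^ (s * i) with hm
  set a := XX 0 + XX 1 with ha
  set b := (wittW1 p) ^ q with hb
  have hm1 : 1 ≤ m := Nat.one_le_iff_ne_zero.2 (pow_ne_zero _ hp.out.ne_zero)
  have hGz : Gpoly p s = a + b := rfl
  have hexp : (a + b) ^ m - a ^ m
      = ∑ k ∈ Finset.range m, a ^ k * b ^ (m - k) * ((m.choose k : ℕ) : MvPolynomial (Fin 2) ℤ) := by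
    rw [add_pow, Finset.sum_range_succ]
    simp
  rw [hGz, hexp, MvPolynomial.coeff_sum]
  apply Finset.dvd_sum
  intro k hk
  rw [Finset.mem_range] at hk
  set t := m - k with ht
  have ht1 : 1 ≤ t := by omega
  by_cases hcase : d 1 < q * t
  · have hz : MvPolynomial.coeff d (a ^ k * b ^ t * ((m.choose k : ℕ) : MvPolynomial (Fin 2) ℤ))
        = 0 := by
      have : a ^ k * b ^ t * ((m.choose k : ℕ) : MvPolynomial (Fin 2) ℤ)
          = (a ^ k * ((m.choose k : ℕ) : MvPolynomial (Fin 2) ℤ)) * (wittW1 p) ^ (q * t) := by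
        rw [hb, ← pow_mul]
        ring
      rw [this]
      exact coeff_mul_wittW1_pow_eq_zero p _ hcase
    rw [hz]
    exact dvd_zero _
  · push_neg at hcase
    have hqt : q * t ≤ d 1 := hcase
    have htq : t < q := by
      by_contra htq
      push_neg at htq
      have : q * q ≤ q * t := Nat.mul_le_mul_left q htq
      have h2 : (q : ℕ) ^ 2 = q * q := sq q
      omega
    -- binomial valuation
    have htm : t ≤ m := by omega
    obtain ⟨v, hvdvd, hvt, hvn, hchoose⟩ := pow_dvd_choose_pp p (s * i) t (by omega) htm
    have hvq : p ^ v ≤ t := Nat.le_of_dvd (by omega) hvdvd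
    have hvs : v < s - 1 := by
      have h1 : p ^ v < p ^ (s - 1) := by omega
      exact (Nat.pow_lt_pow_iff_right hp.out.one_lt).1 h1
    have harith : i + 1 ≤ s * i - v := by
      have h1 : s * i = s * (i - 1) + s := by
        rw [← Nat.mul_succ]
        congr 1
        omega
      have h2 : 2 * (i - 1) ≤ s * (i - 1) := Nat.mul_le_mul_right _ hs
      omega
    have hsymm : m.choose k = m.choose t := by
      have hkm : m - t = k := by omega
      rw [← hkm]
      exact Nat.choose_symm htm
    have hdvdC : (p : ℤ) ^ (i + 1) ∣ ((m.choose k : ℕ) : ℤ) := by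
      rw [hsymm]
      have : ((p : ℤ)) ^ (s * i - v) ∣ ((m.choose t : ℕ) : ℤ) := by
        exact_mod_cast Int.natCast_dvd_natCast.2 hchoose
      exact dvd_trans (pow_dvd_pow _ harith) this
    have hre : a ^ k * b ^ t * ((m.choose k : ℕ) : MvPolynomial (Fin 2) ℤ)
        = CC ((m.choose k : ℕ) : ℤ) * (a ^ k * b ^ t) := by
      rw [← natCast_eq_CC]
      ring
    rw [hre, MvPolynomial.coeff_C_mul]
    exact Dvd.dvd.mul_right hdvdC _

lemma lemA'' (s i : ℕ) (hs : 2 ≤ s) (hi : 2 ≤ i) (d : Fin 2 →₀ ℕ)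
    (hd : d 1 < (p ^ (s - 1)) ^ 2) :
    (p : ℤ) ^ (i + 1) ∣
      MvPolynomial.coeff d
        ((XX 0 + XX 1) ^ (p ^ (s * i)) - XX 0 ^ (p ^ (s * i)) - XX 1 ^ (p ^ (s * i))) := by
  set m := p ^ (s * i) with hm
  have hm1 : 1 ≤ m := Nat.one_le_iff_ne_zero.2 (pow_ne_zero _ hp.out.ne_zero)
  have hsplit : Finset.range (m + 1) = insert 0 (insert m (Finset.Ioo 0 m)) := by
    ext x
    simp only [Finset.mem_range, Finset.mem_insert, Finset.mem_Ioo]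
    omega
  have hexp : (XX 0 + XX 1) ^ m - XX 0 ^ m - XX 1 ^ m
      = ∑ k ∈ Finset.Ioo 0 m,
          XX 0 ^ k * XX 1 ^ (m - k) * ((m.choose k : ℕ) : MvPolynomial (Fin 2) ℤ) := by
    rw [add_pow, hsplit,
      Finset.sum_insert (by simp only [Finset.mem_insert, Finset.mem_Ioo]; omega),
      Finset.sum_insert (by simp only [Finset.mem_Ioo]; omega)]
    simp only [pow_zero, one_mul, Nat.sub_self, Nat.choose_self, Nat.choose_zero_right,
      Nat.cast_one, mul_one, Nat.sub_zero]
    ring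
  rw [hexp, MvPolynomial.coeff_sum]
  apply Finset.dvd_sum
  intro k hk
  rw [Finset.mem_Ioo] at hk
  have hre : XX 0 ^ k * XX 1 ^ (m - k) * ((m.choose k : ℕ) : MvPolynomial (Fin 2) ℤ)
      = CC ((m.choose k : ℕ) : ℤ)
        * MvPolynomial.monomial (Finsupp.single 0 k + Finsupp.single 1 (m - k)) 1 := by
    rw [← natCast_eq_CC, MvPolynomial.X_pow_eq_monomial, MvPolynomial.X_pow_eq_monomial,
      MvPolynomial.monomial_mul, mul_one]
    ring
  rw [hre, MvPolynomial.coeff_C_mul, MvPolynomial.coeff_monomial]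
  split_ifs with hdeq
  · rw [mul_one]
    set t := m - k with ht
    have hd1 : d 1 = t := by
      rw [← hdeq]
      simp
    have ht1 : 1 ≤ t := by omega
    have htm : t ≤ m := by omega
    obtain ⟨v, hvdvd, hvt, hvn, hchoose⟩ := pow_dvd_choose_pp p (s * i) t (by omega) htm
    have hvq : p ^ v ≤ t := Nat.le_of_dvd (by omega) hvdvd
    have hvs : v < (s - 1) * 2 := by
      have h1 : p ^ v < p ^ ((s - 1) * 2) := by
        rw [pow_mul]
        omega
      exact (Nat.pow_lt_pow_iff_right hp.out.one_lt).1 h1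
    have harith : i + 1 ≤ s * i - v := by
      have h1 : s * i = s * (i - 2) + 2 * s := by
        have h3 : i - 2 + 2 = i := by omega
        conv_lhs => rw [← h3]
        rw [Nat.mul_add]
        omega
      have h2 : 2 * (i - 2) ≤ s * (i - 2) := Nat.mul_le_mul_right _ hs
      omega
    have hsymm : m.choose k = m.choose t := by
      have hkm : m - t = k := by omega
      rw [← hkm]
      exact Nat.choose_symm htm
    rw [hsymm]
    have hfin : ((p : ℤ)) ^ (s * i - v) ∣ ((m.choose t : ℕ) : ℤ) := by
      exact_mod_cast Int.natCast_dvd_natCast.2 hchoose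
    exact dvd_trans (pow_dvd_pow _ harith) hfin
  · rw [mul_zero]
    exact dvd_zero _

end HondaAux

namespace HondaAux
variable (p : ℕ) [hp : Fact p.Prime]

section LemC
variable {R : Type*} [CommRing R]

/-- coefficients of powers of `Δ` pick up powers of `p` -/
lemma delta_pow_coeff_dvd (Δ : MvPowerSeries (Fin 2) R)
    (hΔ0 : MvPowerSeries.constantCoeff Δ = 0) (Q M : ℕ)
    (hΔ : ∀ e : Fin 2 →₀ ℕ, e 0 + e 1 ≤ M → e 1 < Q → (p : R) ∣ MvPowerSeries.coeff e Δ) :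
    ∀ k, 1 ≤ k → ∀ e : Fin 2 →₀ ℕ, e 0 + e 1 ≤ M + (k - 1) → e 1 < Q →
      (p : R) ^ k ∣ MvPowerSeries.coeff e (Δ ^ k) := by
  intro k hk
  induction k, hk using Nat.le_induction with
  | base =>
      intro e he heQ
      rw [pow_one, pow_one]
      exact hΔ e (by omega) heQ
  | succ k hk IH =>
      intro e he heQ
      rw [pow_succ Δ, MvPowerSeries.coeff_mul]
      apply Finset.dvd_sum
      intro x hx
      rw [Finset.HasAntidiagonal.mem_antidiagonal] at hx
      have h0 : x.1 0 + x.2 0 = e 0 := by rw [← hx]; simp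
      have h1 : x.1 1 + x.2 1 = e 1 := by rw [← hx]; simp
      by_cases hc1 : x.1 0 + x.1 1 < k
      · rw [coeff_pow_eq_zero_of_constantCoeff Δ hΔ0 hc1, zero_mul]
        exact dvd_zero _
      · push_neg at hc1
        by_cases hc2 : x.2 0 + x.2 1 = 0
        · have hx2 : x.2 = 0 := fin2_eq_zero _ (by omega) (by omega)
          rw [hx2, MvPowerSeries.coeff_zero_eq_constantCoeff]
          rw [hΔ0, mul_zero]
          exact dvd_zero _
        · have hIH : (p : R) ^ k ∣ MvPowerSeries.coeff x.1 (Δ ^ k) :=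
            IH x.1 (by omega) (by omega)
          have hone : (p : R) ∣ MvPowerSeries.coeff x.2 Δ :=
            hΔ x.2 (by omega) (by omega)
          rw [pow_succ]
          exact mul_dvd_mul hIH hone

/-- Lemma C: key congruence for `p^e`-th powers -/
lemma lemC (G Δ : MvPowerSeries (Fin 2) R)
    (hG0 : MvPowerSeries.constantCoeff G = 0)
    (hΔ0 : MvPowerSeries.constantCoeff Δ = 0) (Q M : ℕ)
    (hΔ : ∀ e : Fin 2 →₀ ℕ, e 0 + e 1 ≤ M → e 1 < Q → (p : R) ∣ MvPowerSeries.coeff e Δ)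
    (n : ℕ) (hn : 1 ≤ n) (d : Fin 2 →₀ ℕ) (hd : d 0 + d 1 ≤ M + 1) (hdQ : d 1 < Q) :
    (p : R) ^ (n + 1) ∣ MvPowerSeries.coeff d ((G + Δ) ^ (p ^ n) - G ^ (p ^ n)) := by
  set m := p ^ n with hm
  have hm2 : 2 ≤ m := le_trans hp.out.two_le (Nat.le_self_pow (by omega) p)
  have hexp : (G + Δ) ^ m - G ^ m
      = ∑ k ∈ Finset.range m, G ^ k * Δ ^ (m - k) * ((m.choose k : ℕ) : MvPowerSeries (Fin 2) R) := by
    rw [add_pow, Finset.sum_range_succ]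
    simp
  rw [hexp, map_sum]
  apply Finset.dvd_sum
  intro k hk
  rw [Finset.mem_range] at hk
  set t := m - k with ht
  have ht1 : 1 ≤ t := by omega
  have htm : t ≤ m := by omega
  -- rewrite the ↑choose as C
  have hre : G ^ k * Δ ^ t * ((m.choose k : ℕ) : MvPowerSeries (Fin 2) R)
      = (MvPowerSeries.C (σ := Fin 2) (R := R)) ((m.choose k : ℕ) : R) * (G ^ k * Δ ^ t) := by
    rw [map_natCast (MvPowerSeries.C (σ := Fin 2) (R := R))]
    ring
  rw [hre, MvPowerSeries.coeff_C_mul]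
  -- divisibility of the inner coefficient by p^t
  have hinner : (p : R) ^ t ∣ MvPowerSeries.coeff d (G ^ k * Δ ^ t) := by
    rw [MvPowerSeries.coeff_mul]
    apply Finset.dvd_sum
    intro x hx
    rw [Finset.HasAntidiagonal.mem_antidiagonal] at hx
    have h0 : x.1 0 + x.2 0 = d 0 := by rw [← hx]; simp
    have h1 : x.1 1 + x.2 1 = d 1 := by rw [← hx]; simp
    by_cases hk0 : k = 0
    · -- G^0 = 1 : coefficient vanishes unless x.1 = 0
      subst hk0
      have ht2 : 2 ≤ t := by omega
      by_cases hx1 : x.1 = 0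
      · have hx2 : x.2 = d := by
          rw [← hx, hx1, zero_add]
        apply Dvd.dvd.mul_left
        exact delta_pow_coeff_dvd p Δ hΔ0 Q M hΔ t (by omega) x.2
          (by rw [hx2]; omega) (by rw [hx2]; omega)
      · rw [pow_zero]
        have : MvPowerSeries.coeff x.1 (1 : MvPowerSeries (Fin 2) R) = 0 := by
          rw [MvPowerSeries.coeff_one, if_neg hx1]
        rw [this, zero_mul]
        exact dvd_zero _
    · by_cases hc1 : x.1 0 + x.1 1 = 0
      · have : MvPowerSeries.coeff x.1 (G ^ k) = 0 := by
          apply coeff_pow_eq_zero_of_constantCoeff G hG0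
          omega
        rw [this, zero_mul]
        exact dvd_zero _
      · apply Dvd.dvd.mul_left
        exact delta_pow_coeff_dvd p Δ hΔ0 Q M hΔ t (by omega) x.2
          (by omega) (by omega)
  -- binomial valuation
  obtain ⟨v, hvdvd, hvt, hvn, hchoose⟩ := pow_dvd_choose_pp p n t (by omega) htm
  have hsymm : m.choose k = m.choose t := by
    have hkm : m - t = k := by omega
    rw [← hkm]
    exact Nat.choose_symm htm
  have hC : (p : R) ^ (n - v) ∣ ((m.choose k : ℕ) : R) := by
    rw [hsymm]
    obtain ⟨c, hc⟩ := hchoose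
    exact ⟨(c : R), by exact_mod_cast congrArg (Nat.cast : ℕ → R) hc⟩
  have harith : n + 1 ≤ (n - v) + t := by omega
  calc (p : R) ^ (n + 1) ∣ (p : R) ^ ((n - v) + t) := pow_dvd_pow _ harith
  _ = (p : R) ^ (n - v) * (p : R) ^ t := pow_add _ _ _
  _ ∣ ((m.choose k : ℕ) : R) * MvPowerSeries.coeff d (G ^ k * Δ ^ t) := mul_dvd_mul hC hinner

end LemC
end HondaAux

namespace HondaAux
variable (p : ℕ) [hp : Fact p.Prime]

lemma hondaLog_coeff_pow (s : ℕ) (hs : 1 ≤ s) (i : ℕ) :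
    PowerSeries.coeff (p ^ (s * i)) (hondaLog p s) = (p : ℚ_[p]) ^ (-(i : ℤ)) := by
  have hex : ∃ i', p ^ (s * i) = p ^ (s * i') := ⟨i, rfl⟩
  rw [hondaLog, PowerSeries.coeff_mk, dif_pos hex]
  have h1 : Nat.find hex = i := by
    have hspec := Nat.find_spec hex
    have h2 : s * i = s * Nat.find hex := Nat.pow_right_injective hp.out.two_le hspec
    exact (Nat.eq_of_mul_eq_mul_left (by omega) h2).symm
  rw [h1]

lemma hondaLog_coeff_one (s : ℕ) (hs : 1 ≤ s) :
    PowerSeries.coeff 1 (hondaLog p s) = 1 := by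
  have h := hondaLog_coeff_pow p s hs 0
  simp only [Nat.mul_zero, pow_zero] at h
  rw [h]
  simp

lemma hondaLog_coeff_eq_zero (s : ℕ) (n : ℕ) (h : ¬ ∃ i, n = p ^ (s * i)) :
    PowerSeries.coeff n (hondaLog p s) = 0 := by
  rw [hondaLog, PowerSeries.coeff_mk, dif_neg h]

/-- bridge: coefficient of `X u ^ k` over `ℚ_p` equals cast of the integral coefficient -/
lemma coeff_X_pow_bridge (u : Fin 2) (k : ℕ) (d : Fin 2 →₀ ℕ) :
    MvPowerSeries.coeff d (MvPowerSeries.X u ^ k)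
      = ((MvPolynomial.coeff d ((MvPolynomial.X u : MvPolynomial (Fin 2) ℤ) ^ k) : ℤ) : ℚ_[p]) := by
  rw [MvPowerSeries.X_pow_eq, MvPowerSeries.coeff_monomial,
    MvPolynomial.X_pow_eq_monomial, MvPolynomial.coeff_monomial]
  split_ifs with h1 h2 h3
  · simp
  · exact absurd h1.symm h2
  · exact absurd h3.symm h1
  · simp

/-- `Finsupp.degree` on `Fin 2` -/
lemma degree_fin2 (d : Fin 2 →₀ ℕ) : d.degree = d 0 + d 1 := by
  rw [Finsupp.degree_apply]
  rw [Finset.sum_subset (Finset.subset_univ d.support)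
    (by intro x _ hx; exact Finsupp.notMem_support_iff.1 hx)]
  exact Fin.sum_univ_two _

end HondaAux

namespace HondaAux
variable (p : ℕ) [hp : Fact p.Prime]

local notation "XX" => (MvPolynomial.X : Fin 2 → MvPolynomial (Fin 2) ℤ)
local notation "CC" => (MvPolynomial.C : ℤ →+* MvPolynomial (Fin 2) ℤ)

lemma norm_int_cast_le (z : ℤ) (k : ℕ) (h : (p : ℤ) ^ k ∣ z) :
    ‖((z : ℤ) : ℚ_[p])‖ ≤ (p : ℝ) ^ (-(k : ℤ)) :=
  (Padic.norm_int_le_pow_iff_dvd z k).2 h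

lemma norm_padic_cast_le (z : ℤ_[p]) (k : ℕ) (h : (p : ℤ_[p]) ^ k ∣ z) :
    ‖(z : ℚ_[p])‖ ≤ (p : ℝ) ^ (-(k : ℤ)) := by
  rw [← PadicInt.norm_def]
  exact (PadicInt.norm_le_pow_iff_mem_span_pow z k).2 (Ideal.mem_span_singleton.2 h)

lemma zp_mono {a b : ℤ} (h : a ≤ b) : (p : ℝ) ^ a ≤ (p : ℝ) ^ b := by
  apply zpow_le_zpow_right₀ _ h
  exact_mod_cast le_trans one_le_two (by exact_mod_cast hp.out.two_le)

lemma norm_lf (s : ℕ) (hs : 1 ≤ s) (i : ℕ) :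
    ‖PowerSeries.coeff (p ^ (s * i)) (hondaLog p s)‖ = (p : ℝ) ^ (i : ℤ) := by
  rw [hondaLog_coeff_pow p s hs i, Padic.norm_p_zpow, neg_neg]

lemma norm_sum_le_max (t : Finset ℕ) (f : ℕ → ℚ_[p]) (C : ℝ) (hC : 0 ≤ C)
    (h : ∀ k ∈ t, ‖f k‖ ≤ C) : ‖∑ k ∈ t, f k‖ ≤ C := by
  refine Finset.sum_induction f (fun x => ‖x‖ ≤ C) ?_ (by simpa using hC) h
  intro a b ha hb
  exact le_trans (Padic.nonarchimedean a b) (max_le ha hb)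

/-- the `U`-part estimate -/
lemma normU (s i : ℕ) (hs : 2 ≤ s) (hi : 1 ≤ i)
    (F₀ Gp : MvPowerSeries (Fin 2) ℤ_[p])
    (hG0 : MvPowerSeries.constantCoeff Gp = 0)
    (hΔ0 : MvPowerSeries.constantCoeff (F₀ - Gp) = 0)
    (Q M : ℕ)
    (hΔ : ∀ e : Fin 2 →₀ ℕ, e 0 + e 1 ≤ M → e 1 < Q →
      (p : ℤ_[p]) ∣ MvPowerSeries.coeff e (F₀ - Gp))
    (d : Fin 2 →₀ ℕ) (hd : d 0 + d 1 ≤ M + 1) (hdQ : d 1 < Q) :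
    ‖((MvPowerSeries.coeff d (Gp ^ (p ^ (s * i)) - F₀ ^ (p ^ (s * i))) : ℤ_[p]) : ℚ_[p])‖
      ≤ (p : ℝ) ^ (-((s * i + 1 : ℕ) : ℤ)) := by
  have hsi : 1 ≤ s * i := by
    calc 1 = 1 * 1 := by omega
    _ ≤ s * i := Nat.mul_le_mul (by omega) hi
  have hlem := lemC p Gp (F₀ - Gp) hG0 hΔ0 Q M hΔ (s * i) hsi d hd hdQ
  have heq : Gp + (F₀ - Gp) = F₀ := by ring
  rw [heq] at hlem
  apply norm_padic_cast_le
  have heq2 : Gp ^ (p ^ (s * i)) - F₀ ^ (p ^ (s * i))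
      = -(F₀ ^ (p ^ (s * i)) - Gp ^ (p ^ (s * i))) := by ring
  rw [heq2, map_neg]
  exact Dvd.dvd.neg_right hlem

/-- the `S`-part estimate for `i ≥ 2` -/
lemma normS_int (s i : ℕ) (hs : 2 ≤ s) (hi : 2 ≤ i) (d : Fin 2 →₀ ℕ)
    (hdQ : d 1 < (p ^ (s - 1)) ^ 2) :
    (p : ℤ) ^ (i + 1) ∣ MvPolynomial.coeff d
      (XX 0 ^ (p ^ (s * i)) + XX 1 ^ (p ^ (s * i)) - (Gpoly p s) ^ (p ^ (s * i))) := by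
  have h1 := lemA'' p s i hs hi d hdQ
  have h2 := lemA' p s i hs (by omega) d hdQ
  have heq : XX 0 ^ (p ^ (s * i)) + XX 1 ^ (p ^ (s * i)) - (Gpoly p s) ^ (p ^ (s * i))
      = -(((XX 0 + XX 1) ^ (p ^ (s * i)) - XX 0 ^ (p ^ (s * i)) - XX 1 ^ (p ^ (s * i)))
          + ((Gpoly p s) ^ (p ^ (s * i)) - (XX 0 + XX 1) ^ (p ^ (s * i)))) := by ring
  rw [heq, MvPolynomial.coeff_neg, MvPolynomial.coeff_add]
  exact Dvd.dvd.neg_right (dvd_add h1 h2)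

/-- the `S`-part estimate for `i = 1`, after subtracting `p·w₁^q` -/
lemma normS1_int (s : ℕ) (hs : 2 ≤ s) (d : Fin 2 →₀ ℕ)
    (hdQ : d 1 < (p ^ (s - 1)) ^ 2) :
    (p : ℤ) ^ 2 ∣ MvPolynomial.coeff d
      (XX 0 ^ (p ^ s) + XX 1 ^ (p ^ s) - (Gpoly p s) ^ (p ^ s)
        - CC (p : ℤ) * (wittW1 p) ^ (p ^ (s - 1))) := by
  obtain ⟨c, hc⟩ := witt_identity_pow p s (by omega)
  have h2 := lemA' p s 1 hs (by omega) d hdQ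
  rw [Nat.mul_one] at h2
  have heq : XX 0 ^ (p ^ s) + XX 1 ^ (p ^ s) - (Gpoly p s) ^ (p ^ s)
        - CC (p : ℤ) * (wittW1 p) ^ (p ^ (s - 1))
      = CC ((p : ℤ) ^ 2) * c - ((Gpoly p s) ^ (p ^ s) - (XX 0 + XX 1) ^ (p ^ s)) := by
    rw [hc]
    ring
  rw [heq, MvPolynomial.coeff_sub]
  apply dvd_sub
  · rw [MvPolynomial.coeff_C_mul]
    exact Dvd.dvd.mul_right ⟨1, by ring⟩ _
  · exact dvd_trans (pow_dvd_pow _ (by omega)) h2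

end HondaAux

/-- For `s > 1` and `q = p^(s-1)`,
`F(x,y) ≡ x + y + w̄₁(x,y)^q mod (y^(q²))`, where `w̄₁` is the mod `p` reduction of the
first Witt addition polynomial `w₁(x,y) = -Σ_{0<j<p} (1/p) C(p,j) xʲ y^{p-j}`. -/
theorem honda_congr_mod_y_q_sq (p : ℕ) [Fact p.Prime] (s : ℕ) (hs : 1 < s)
    (F : MvPowerSeries (Fin 2) (ZMod p)) (hF : IsHondaFGL p s F) :
    ∀ i j : ℕ, j < (p ^ (s - 1)) ^ 2 →
      MvPowerSeries.coeff (Finsupp.single (0 : Fin 2) i + Finsupp.single 1 j) F =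
        MvPolynomial.coeff (Finsupp.single (0 : Fin 2) i + Finsupp.single 1 j)
          (MvPolynomial.X 0 + MvPolynomial.X 1 +
            (MvPolynomial.map (Int.castRingHom (ZMod p)) (wittW1 p)) ^ (p ^ (s - 1))
            : MvPolynomial (Fin 2) (ZMod p)) := by

  obtain ⟨F₀, hF0c, hlog, hFeq⟩ := hF
  have hp2 := (Fact.out : p.Prime).two_le
  have hs2 : 2 ≤ s := hs
  set Q : ℕ := (p ^ (s - 1)) ^ 2 with hQ
  set Gz : MvPolynomial (Fin 2) ℤ := HondaAux.Gpoly p s with hGzdef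
  set Gp : MvPowerSeries (Fin 2) ℤ_[p] :=
    MvPowerSeries.map (Int.castRingHom ℤ_[p]) (Gz : MvPowerSeries (Fin 2) ℤ) with hGpdef
  have hq1 : 1 ≤ p ^ (s - 1) := Nat.one_le_pow _ _ (by omega)
  -- fixed coefficient bridges
  have hGzcoeff : ∀ (k : ℕ) (e : Fin 2 →₀ ℕ),
      MvPowerSeries.coeff e (Gp ^ k) = ((MvPolynomial.coeff e (Gz ^ k) : ℤ) : ℤ_[p]) := by
    intro k e
    rw [hGpdef, ← map_pow, MvPowerSeries.coeff_map, ← MvPolynomial.coe_pow,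
      MvPolynomial.coeff_coe]
    rfl
  have hGzc : MvPolynomial.coeff (0 : Fin 2 →₀ ℕ) Gz = 0 := by
    rw [hGzdef, HondaAux.Gpoly, MvPolynomial.coeff_add, MvPolynomial.coeff_add,
      HondaAux.coeff_wittW1_pow_eq_zero p (by simpa using (by omega : 0 < p ^ (s - 1)))]
    simp [MvPolynomial.coeff_X', Finsupp.single_eq_zero]
  have hGpc : MvPowerSeries.constantCoeff Gp = 0 := by
    have h0 := hGzcoeff 1 0
    rw [pow_one, pow_one] at h0
    rw [← MvPowerSeries.coeff_zero_eq_constantCoeff, h0, hGzc]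
    simp
  have hΔc : MvPowerSeries.constantCoeff (F₀ - Gp) = 0 := by
    rw [map_sub, hF0c, hGpc, sub_zero]
  -- main induction
  have main : ∀ n : ℕ, ∀ d : Fin 2 →₀ ℕ, d 0 + d 1 = n → d 1 < Q →
      (p : ℤ_[p]) ∣ MvPowerSeries.coeff d (F₀ - Gp) := by
    intro n
    induction n using Nat.strong_induction_on with
    | _ n IH =>
    intro d hdn hdQ
    by_cases hn0 : n = 0
    · have hd0 : d = 0 := fin2_eq_zero d (by omega) (by omega)
      rw [hd0, MvPowerSeries.coeff_zero_eq_constantCoeff, hΔc]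
      exact dvd_zero _
    · have hn1 : 1 ≤ n := by omega
      have hΔind : ∀ e : Fin 2 →₀ ℕ, e 0 + e 1 ≤ n - 1 → e 1 < Q →
          (p : ℤ_[p]) ∣ MvPowerSeries.coeff e (F₀ - Gp) := by
        intro e he heQ
        exact IH (e 0 + e 1) (by omega) e rfl heQ
      -- the coefficient equation from the logarithm condition
      have H1 := congrArg (MvPowerSeries.coeff d) hlog
      rw [map_add] at H1
      have happ : ∀ (g : MvPowerSeries (Fin 2) ℚ_[p]),
          MvPowerSeries.coeff d (substPS g (hondaLog p s))
            = ∑ k ∈ Finset.range (n + 1),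
                PowerSeries.coeff k (hondaLog p s)
                  * MvPowerSeries.coeff d (g ^ k) := by
        intro g
        rw [MvPowerSeries.coeff_apply]
        simp only [substPS]
        rw [dsum_eq, hdn]
      rw [happ, happ, happ] at H1
      have hconv : ∀ k : ℕ, MvPowerSeries.coeff d
          ((MvPowerSeries.map (PadicInt.Coe.ringHom (p := p)) F₀) ^ k)
          = ((MvPowerSeries.coeff d (F₀ ^ k) : ℤ_[p]) : ℚ_[p]) := by
        intro k
        rw [← map_pow, MvPowerSeries.coeff_map]
        rfl
      simp only [hconv] at H1
      -- the T-terms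
      set T : ℕ → ℚ_[p] := fun k =>
        PowerSeries.coeff k (hondaLog p s) *
          ((MvPowerSeries.coeff d (MvPowerSeries.X 0 ^ k)
            + MvPowerSeries.coeff d (MvPowerSeries.X 1 ^ k))
            - ((MvPowerSeries.coeff d (F₀ ^ k) : ℤ_[p]) : ℚ_[p])) with hT
      have hsum0 : ∑ k ∈ Finset.range (n + 1), T k = 0 := by
        have hTk : ∀ k ∈ Finset.range (n + 1), T k =
            (PowerSeries.coeff k (hondaLog p s)
              * MvPowerSeries.coeff d (MvPowerSeries.X 0 ^ k)
            + PowerSeries.coeff k (hondaLog p s)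
              * MvPowerSeries.coeff d (MvPowerSeries.X 1 ^ k))
            - PowerSeries.coeff k (hondaLog p s)
              * ((MvPowerSeries.coeff d (F₀ ^ k) : ℤ_[p]) : ℚ_[p]) := by
          intro k _
          rw [hT]
          ring
        rw [Finset.sum_congr rfl hTk, Finset.sum_sub_distrib, Finset.sum_add_distrib, ← H1,
          sub_self]
      -- abbreviations for the two key casts
      set δ : ℚ_[p] := ((MvPowerSeries.coeff d (F₀ - Gp) : ℤ_[p]) : ℚ_[p]) with hδ
      set A : ℚ_[p] := ((MvPolynomial.coeff d
        (MvPolynomial.X 0 + MvPolynomial.X 1 - Gz : MvPolynomial (Fin 2) ℤ) : ℤ) : ℚ_[p]) with hA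
      -- T 1 = A - δ
      have hT1 : T 1 = A - δ := by
        rw [hT]
        simp only []
        rw [HondaAux.coeff_X_pow_bridge p 0 1 d, HondaAux.coeff_X_pow_bridge p 1 1 d]
        rw [HondaAux.hondaLog_coeff_one p s (by omega), one_mul]
        simp only [pow_one]
        rw [hA, hδ, map_sub]
        have hgp1 : ((MvPowerSeries.coeff d Gp : ℤ_[p]) : ℚ_[p])
            = ((MvPolynomial.coeff d Gz : ℤ) : ℚ_[p]) := by
          have := hGzcoeff 1 d
          rw [pow_one, pow_one] at this
          rw [this, PadicInt.coe_intCast]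
        push_cast [MvPolynomial.coeff_sub, MvPolynomial.coeff_add, pow_one]
        rw [← hgp1]
        push_cast
        ring
      -- split the sum at k = 1
      have h1mem : (1 : ℕ) ∈ Finset.range (n + 1) := by
        simp only [Finset.mem_range]
        omega
      have hδeq : δ = A + ∑ k ∈ (Finset.range (n + 1)).erase 1, T k := by
        have hsplit := Finset.add_sum_erase _ T h1mem
        rw [hsum0, hT1] at hsplit
        linear_combination -hsplit
      -- norms of the erased terms
      have hbound : ∀ k ∈ (Finset.range (n + 1)).erase 1, k ≠ p ^ s →
          ‖T k‖ ≤ (p : ℝ) ^ (-1 : ℤ) := by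
        intro k hk hknot
        obtain ⟨hk1, hkr⟩ := Finset.mem_erase.1 hk
        by_cases hex : ∃ i, k = p ^ (s * i)
        · obtain ⟨i, rfl⟩ := hex
          have hi1 : 1 ≤ i := by
            by_contra hi0
            push_neg at hi0
            interval_cases i
            simp at hk1
          have hi2 : 2 ≤ i := by
            rcases Nat.lt_or_ge i 2 with h | h
            · exfalso
              have : i = 1 := by omega
              rw [this, Nat.mul_one] at hknot
              exact hknot rfl
            · exact h
          have hxg : (MvPowerSeries.coeff d (MvPowerSeries.X 0 ^ (p ^ (s * i)))
                + MvPowerSeries.coeff d (MvPowerSeries.X 1 ^ (p ^ (s * i))))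
                - ((MvPowerSeries.coeff d (Gp ^ (p ^ (s * i))) : ℤ_[p]) : ℚ_[p])
              = ((MvPolynomial.coeff d
                  ((MvPolynomial.X 0 : MvPolynomial (Fin 2) ℤ) ^ (p ^ (s * i))
                    + MvPolynomial.X 1 ^ (p ^ (s * i)) - Gz ^ (p ^ (s * i))) : ℤ) : ℚ_[p]) := by
            rw [HondaAux.coeff_X_pow_bridge p 0 _ d, HondaAux.coeff_X_pow_bridge p 1 _ d,
              hGzcoeff, PadicInt.coe_intCast]
            push_cast [MvPolynomial.coeff_sub, MvPolynomial.coeff_add]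
            ring
          have hS : ‖(MvPowerSeries.coeff d (MvPowerSeries.X 0 ^ (p ^ (s * i)))
                + MvPowerSeries.coeff d (MvPowerSeries.X 1 ^ (p ^ (s * i))))
                - ((MvPowerSeries.coeff d (Gp ^ (p ^ (s * i))) : ℤ_[p]) : ℚ_[p])‖
              ≤ (p : ℝ) ^ (-((i + 1 : ℕ) : ℤ)) := by
            rw [hxg]
            exact HondaAux.norm_int_cast_le p _ _ (HondaAux.normS_int p s i hs2 hi2 d hdQ)
          have hU : ‖((MvPowerSeries.coeff d (Gp ^ (p ^ (s * i))) : ℤ_[p]) : ℚ_[p])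
                - ((MvPowerSeries.coeff d (F₀ ^ (p ^ (s * i))) : ℤ_[p]) : ℚ_[p])‖
              ≤ (p : ℝ) ^ (-((s * i + 1 : ℕ) : ℤ)) := by
            have heq : ((MvPowerSeries.coeff d (Gp ^ (p ^ (s * i))) : ℤ_[p]) : ℚ_[p])
                - ((MvPowerSeries.coeff d (F₀ ^ (p ^ (s * i))) : ℤ_[p]) : ℚ_[p])
                = ((MvPowerSeries.coeff d
                    (Gp ^ (p ^ (s * i)) - F₀ ^ (p ^ (s * i))) : ℤ_[p]) : ℚ_[p]) := by
              rw [map_sub]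
              push_cast
              ring
            rw [heq]
            exact HondaAux.normU p s i hs2 hi1 F₀ Gp hGpc hΔc Q (n - 1) hΔind d (by omega) hdQ
          have hTkb : T (p ^ (s * i)) =
              PowerSeries.coeff (p ^ (s * i)) (hondaLog p s) *
                (((MvPowerSeries.coeff d (MvPowerSeries.X 0 ^ (p ^ (s * i)))
                  + MvPowerSeries.coeff d (MvPowerSeries.X 1 ^ (p ^ (s * i))))
                  - ((MvPowerSeries.coeff d (Gp ^ (p ^ (s * i))) : ℤ_[p]) : ℚ_[p]))
                + (((MvPowerSeries.coeff d (Gp ^ (p ^ (s * i))) : ℤ_[p]) : ℚ_[p])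
                  - ((MvPowerSeries.coeff d (F₀ ^ (p ^ (s * i))) : ℤ_[p]) : ℚ_[p]))) := by
            rw [hT]
            ring
          rw [hTkb, norm_mul, HondaAux.norm_lf p s (by omega) i]
          have hmax : ‖(MvPowerSeries.coeff d (MvPowerSeries.X 0 ^ (p ^ (s * i)))
                + MvPowerSeries.coeff d (MvPowerSeries.X 1 ^ (p ^ (s * i))))
                - ((MvPowerSeries.coeff d (Gp ^ (p ^ (s * i))) : ℤ_[p]) : ℚ_[p])
                + (((MvPowerSeries.coeff d (Gp ^ (p ^ (s * i))) : ℤ_[p]) : ℚ_[p])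
                  - ((MvPowerSeries.coeff d (F₀ ^ (p ^ (s * i))) : ℤ_[p]) : ℚ_[p]))‖
              ≤ (p : ℝ) ^ (-((i + 1 : ℕ) : ℤ)) := by
            apply le_trans (Padic.nonarchimedean _ _)
            apply max_le hS
            apply le_trans hU
            apply HondaAux.zp_mono p
            have : i ≤ s * i := Nat.le_mul_of_pos_left i (by omega)
            omega
          calc (p : ℝ) ^ (i : ℤ) * ‖_‖ ≤ (p : ℝ) ^ (i : ℤ) * (p : ℝ) ^ (-((i + 1 : ℕ) : ℤ)) := by
                apply mul_le_mul_of_nonneg_left hmax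
                positivity
          _ = (p : ℝ) ^ ((i : ℤ) + -((i + 1 : ℕ) : ℤ)) := by
                rw [← zpow_add₀ (by positivity : (p : ℝ) ≠ 0)]
          _ ≤ (p : ℝ) ^ (-1 : ℤ) := by
                apply HondaAux.zp_mono p
                push_cast
                omega
        · have hz : PowerSeries.coeff k (hondaLog p s) = 0 :=
            HondaAux.hondaLog_coeff_eq_zero p s k hex
          rw [hT]
          simp only [hz, zero_mul, norm_zero]
          positivity
      -- the paired bound at k = p^s
      have hpair : ‖T (p ^ s) + A‖ ≤ (p : ℝ) ^ (-1 : ℤ) := by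
        have hApw : A = ((MvPolynomial.coeff d
            (-((wittW1 p) ^ (p ^ (s - 1)))) : ℤ) : ℚ_[p]) := by
          rw [hA]
          congr 2
          rw [hGzdef, HondaAux.Gpoly]
          ring_nf
        have hks : p ^ s = p ^ (s * 1) := by rw [Nat.mul_one]
        have hlfps : PowerSeries.coeff (p ^ s) (hondaLog p s)
            = (p : ℚ_[p]) ^ (-1 : ℤ) := by
          rw [hks, HondaAux.hondaLog_coeff_pow p s (by omega) 1]
          norm_num
        have hxg : (MvPowerSeries.coeff d (MvPowerSeries.X 0 ^ (p ^ s))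
              + MvPowerSeries.coeff d (MvPowerSeries.X 1 ^ (p ^ s)))
              - ((MvPowerSeries.coeff d (Gp ^ (p ^ s)) : ℤ_[p]) : ℚ_[p])
            = ((MvPolynomial.coeff d
                ((MvPolynomial.X 0 : MvPolynomial (Fin 2) ℤ) ^ (p ^ s)
                  + MvPolynomial.X 1 ^ (p ^ s) - Gz ^ (p ^ s)) : ℤ) : ℚ_[p]) := by
          rw [HondaAux.coeff_X_pow_bridge p 0 _ d, HondaAux.coeff_X_pow_bridge p 1 _ d,
            hGzcoeff, PadicInt.coe_intCast]
          push_cast [MvPolynomial.coeff_sub, MvPolynomial.coeff_add]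
          ring
        have hU : ‖((MvPowerSeries.coeff d (Gp ^ (p ^ s)) : ℤ_[p]) : ℚ_[p])
              - ((MvPowerSeries.coeff d (F₀ ^ (p ^ s)) : ℤ_[p]) : ℚ_[p])‖
            ≤ (p : ℝ) ^ (-((s * 1 + 1 : ℕ) : ℤ)) := by
          have heq : ((MvPowerSeries.coeff d (Gp ^ (p ^ s)) : ℤ_[p]) : ℚ_[p])
              - ((MvPowerSeries.coeff d (F₀ ^ (p ^ s)) : ℤ_[p]) : ℚ_[p])
              = ((MvPowerSeries.coeff d
                  (Gp ^ (p ^ (s * 1)) - F₀ ^ (p ^ (s * 1))) : ℤ_[p]) : ℚ_[p]) := by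
            rw [map_sub, ← hks]
            push_cast
            ring
          rw [heq]
          exact HondaAux.normU p s 1 hs2 (le_refl 1) F₀ Gp hGpc hΔc Q (n - 1) hΔind d
            (by omega) hdQ
        -- decompose T (p^s) + A
        have hdecomp : T (p ^ s) + A =
            ((p : ℚ_[p]) ^ (-1 : ℤ) *
              (((MvPowerSeries.coeff d (MvPowerSeries.X 0 ^ (p ^ s))
                + MvPowerSeries.coeff d (MvPowerSeries.X 1 ^ (p ^ s)))
                - ((MvPowerSeries.coeff d (Gp ^ (p ^ s)) : ℤ_[p]) : ℚ_[p])) + (p : ℚ_[p]) * A))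
            + (p : ℚ_[p]) ^ (-1 : ℤ) *
              (((MvPowerSeries.coeff d (Gp ^ (p ^ s)) : ℤ_[p]) : ℚ_[p])
                - ((MvPowerSeries.coeff d (F₀ ^ (p ^ s)) : ℤ_[p]) : ℚ_[p])) := by
          rw [hT]
          simp only [hlfps]
          have hpne : (p : ℚ_[p]) ≠ 0 := by
            exact_mod_cast (Nat.Prime.ne_zero (Fact.out : p.Prime))
          field_simp
          ring
        rw [hdecomp]
        have hnormp : ‖((p : ℚ_[p]) ^ (-1 : ℤ))‖ = (p : ℝ) ^ (1 : ℤ) := by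
          rw [Padic.norm_p_zpow]
          norm_num
        apply le_trans (Padic.nonarchimedean _ _)
        apply max_le
        · -- main part : p² divisibility
          have hinner : (MvPowerSeries.coeff d (MvPowerSeries.X 0 ^ (p ^ s))
                + MvPowerSeries.coeff d (MvPowerSeries.X 1 ^ (p ^ s)))
                - ((MvPowerSeries.coeff d (Gp ^ (p ^ s)) : ℤ_[p]) : ℚ_[p])
                + (p : ℚ_[p]) * A
              = ((MvPolynomial.coeff d
                  ((MvPolynomial.X 0 : MvPolynomial (Fin 2) ℤ) ^ (p ^ s)
                    + MvPolynomial.X 1 ^ (p ^ s) - Gz ^ (p ^ s)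
                    - MvPolynomial.C (p : ℤ) * (wittW1 p) ^ (p ^ (s - 1))) : ℤ) : ℚ_[p]) := by
            rw [hxg, hApw]
            push_cast [MvPolynomial.coeff_sub, MvPolynomial.coeff_add, MvPolynomial.coeff_neg,
              MvPolynomial.coeff_C_mul]
            ring
          rw [norm_mul, hnormp, hinner]
          have hdvd2 := HondaAux.normS1_int p s hs2 d hdQ
          rw [← hGzdef] at hdvd2
          have := HondaAux.norm_int_cast_le p _ 2 hdvd2
          calc (p : ℝ) ^ (1 : ℤ) * ‖_‖ ≤ (p : ℝ) ^ (1 : ℤ) * (p : ℝ) ^ (-((2 : ℕ) : ℤ)) := by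
                apply mul_le_mul_of_nonneg_left this
                positivity
          _ ≤ (p : ℝ) ^ (-1 : ℤ) := by
                rw [← zpow_add₀ (by positivity : (p : ℝ) ≠ 0)]
                apply HondaAux.zp_mono p
                norm_num
        · rw [norm_mul, hnormp]
          calc (p : ℝ) ^ (1 : ℤ) * ‖_‖ ≤ (p : ℝ) ^ (1 : ℤ) * (p : ℝ) ^ (-((s * 1 + 1 : ℕ) : ℤ)) := by
                apply mul_le_mul_of_nonneg_left hU
                positivity
          _ ≤ (p : ℝ) ^ (-1 : ℤ) := by
                rw [← zpow_add₀ (by positivity : (p : ℝ) ≠ 0)]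
                apply HondaAux.zp_mono p
                push_cast
                omega
      -- homogeneity : A = 0 when the degree is not p^s
      have hA0 : d 0 + d 1 ≠ p ^ s → A = 0 := by
        intro hne
        have hhom : ((wittW1 p) ^ (p ^ (s - 1))).IsHomogeneous (p ^ s) := by
          have h := (HondaAux.wittW1_isHomogeneous p).pow (p ^ (s - 1))
          have hexp : p * p ^ (s - 1) = p ^ s := by
            rw [← pow_succ']
            congr 1
            omega
          rwa [hexp] at h
        have hco : MvPolynomial.coeff d ((wittW1 p) ^ (p ^ (s - 1))) = 0 := by
          apply hhom.coeff_eq_zero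
          rw [HondaAux.degree_fin2]
          omega
        rw [hA]
        have : MvPolynomial.coeff d
            (MvPolynomial.X 0 + MvPolynomial.X 1 - Gz : MvPolynomial (Fin 2) ℤ)
            = -MvPolynomial.coeff d ((wittW1 p) ^ (p ^ (s - 1))) := by
          rw [hGzdef, HondaAux.Gpoly]
          rw [show (MvPolynomial.X 0 + MvPolynomial.X 1
            - (MvPolynomial.X 0 + MvPolynomial.X 1 + (wittW1 p) ^ (p ^ (s - 1)))
            : MvPolynomial (Fin 2) ℤ) = -((wittW1 p) ^ (p ^ (s - 1))) by ring,
            MvPolynomial.coeff_neg]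
        rw [this, hco]
        simp
      -- conclude ‖δ‖ ≤ p⁻¹
      have hδnorm : ‖δ‖ ≤ (p : ℝ) ^ (-1 : ℤ) := by
        by_cases hps : p ^ s ≤ n
        · have hps1 : p ^ s ≠ 1 := by
            have : p ≤ p ^ s := Nat.le_self_pow (by omega) p
            omega
          have hmem2 : p ^ s ∈ (Finset.range (n + 1)).erase 1 := by
            rw [Finset.mem_erase]
            exact ⟨hps1, by simp only [Finset.mem_range]; omega⟩
          have hsplit2 := Finset.add_sum_erase _ T hmem2
          rw [hδeq, ← hsplit2]
          have hre : A + (T (p ^ s) + ∑ k ∈ ((Finset.range (n + 1)).erase 1).erase (p ^ s), T k)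
              = (T (p ^ s) + A) + ∑ k ∈ ((Finset.range (n + 1)).erase 1).erase (p ^ s), T k := by
            ring
          rw [hre]
          apply le_trans (Padic.nonarchimedean _ _)
          apply max_le hpair
          apply HondaAux.norm_sum_le_max p _ _ _ (by positivity)
          intro k hk
          obtain ⟨hkps, hk'⟩ := Finset.mem_erase.1 hk
          exact hbound k hk' hkps
        · push_neg at hps
          have hA0' : A = 0 := hA0 (by omega)
          rw [hδeq, hA0', zero_add]
          apply HondaAux.norm_sum_le_max p _ _ _ (by positivity)
          intro k hk
          obtain ⟨hk1, hkr⟩ := Finset.mem_erase.1 hk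
          rw [Finset.mem_range] at hkr
          exact hbound k hk (by omega)
      -- back to divisibility
      have hfin : ‖MvPowerSeries.coeff d (F₀ - Gp)‖ ≤ (p : ℝ) ^ (-(1 : ℕ) : ℤ) := by
        rw [PadicInt.norm_def]
        exact_mod_cast hδnorm
      have := (PadicInt.norm_le_pow_iff_mem_span_pow _ 1).1 hfin
      rw [Ideal.mem_span_singleton, pow_one] at this
      exact this
  -- conclusion
  intro i j hj
  set d : Fin 2 →₀ ℕ := Finsupp.single (0 : Fin 2) i + Finsupp.single 1 j with hd
  have hd1 : d 1 = j := by
    rw [hd]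
    simp [Finsupp.single_apply]
  have hdvd := main (d 0 + d 1) d rfl (by rw [hd1]; exact hj)
  rw [hFeq, MvPowerSeries.coeff_map]
  have hRHS : (MvPolynomial.X 0 + MvPolynomial.X 1 +
      (MvPolynomial.map (Int.castRingHom (ZMod p)) (wittW1 p)) ^ (p ^ (s - 1))
      : MvPolynomial (Fin 2) (ZMod p)) = MvPolynomial.map (Int.castRingHom (ZMod p)) Gz := by
    rw [hGzdef, HondaAux.Gpoly]
    rw [map_add, map_add, map_pow, MvPolynomial.map_X, MvPolynomial.map_X]
  rw [hRHS, MvPolynomial.coeff_map]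
  obtain ⟨c, hc⟩ := hdvd
  rw [map_sub] at hc
  have hF0d : MvPowerSeries.coeff d F₀
      = MvPowerSeries.coeff d Gp + (p : ℤ_[p]) * c := by
    linear_combination hc
  rw [hF0d, map_add, map_mul]
  have hpz : (PadicInt.toZMod (p := p)) ((p : ℕ) : ℤ_[p]) = 0 := by
    rw [map_natCast]
    exact ZMod.natCast_self p
  rw [show ((p : ℤ_[p])) = (((p : ℕ) : ℤ_[p])) by norm_num, hpz, zero_mul, add_zero]
  have hgpd : MvPowerSeries.coeff d Gp = ((MvPolynomial.coeff d Gz : ℤ) : ℤ_[p]) := by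
    rw [hGpdef, MvPowerSeries.coeff_map, MvPolynomial.coeff_coe]
    rfl
  rw [hgpd, map_intCast]
  rfl
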